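/- For the finite Markov chain imbedding counting jumps: let (Z_t)_{t=1..n} be an inhomogeneous two-state Markov chain with transition probabilities a_t = P(Z_t = 1 | Z_{t−1} = 1) and b_t = P(Z_t = 2 | Z_{t−1} = 2) and initial law η. Define the imbedded chain W_t = (J_t, Z_t) where J_t = #{2 ≤ s ≤ t : Z_{s−1} = 1, Z_s = 2} counts 1→2 jumps up to time t, with J counts exceeding ℓ absorbed in a single state. Then (W_t) is an inhomogeneous Markov chain on the imbedded state space, and P(J_n = k) equals the sum of the appropriate entries of the row vector η Π_{t=2}^n Λ(a_t, b_t), where Λ(a, b) is the block-bidiagonal imbedding transition matrix with 2×2 diagonal blocks B(a, b) = [[b, 1−b], [0, a]] and off-diagonal entries 1−a linking state (k, 1) to state (k+1, 2). -/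

import Mathlib

open Finset
open scoped Classical

noncomputable section

/-- Path probability of an inhomogeneous two-state Markov chain `(Z_t)_{t=0..n}` on
`Fin 2` (state `0` is "state 1", state `1` is "state 2") with initial law `η`, stay
probabilities `a t = P(Z_{t+1} = 1 | Z_t = 1)` and `b t = P(Z_{t+1} = 2 | Z_t = 2)`. -/
def twoStateMu (n : ℕ) (η : Fin 2 → ℝ) (a b : Fin n → ℝ) (z : Fin (n + 1) → Fin 2) : ℝ :=
  η (z 0) *
    ∏ t : Fin n,
      (if z t.castSucc = 0 then (if z t.succ = 0 then a t else 1 - a t)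
       else (if z t.succ = 1 then b t else 1 - b t))

/-- The FMCI transition matrix for counting jumps from state 1 to state 2: index `2k`
encodes "(k jumps, state 2)", index `2k+1` encodes "(k jumps, state 1)", and index
`2ℓ+2` is the absorbing overflow state.  The diagonal blocks are
`B(a,b) = [[b, 1−b], [0, a]]` and the off-diagonal entries `1−a` link `(k, 1)` to
`(k+1, 2)`. -/
def jumpLambda (ℓ : ℕ) (a b : ℝ) : Matrix (Fin (2 * ℓ + 3)) (Fin (2 * ℓ + 3)) ℝ :=
  fun p q =>
    if (p : ℕ) = 2 * ℓ + 2 then (if q = p then 1 else 0)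
    else if q = p then (if (p : ℕ) % 2 = 0 then b else a)
    else if (q : ℕ) = (p : ℕ) + 1 then (if (p : ℕ) % 2 = 0 then 1 - b else 1 - a)
    else 0

namespace FMCIJumps

def embedIdx (ℓ j : ℕ) (s : Fin 2) : Fin (2 * ℓ + 3) :=
  if h : j ≤ ℓ then ⟨2 * j + (if s = 0 then 1 else 0), by split <;> omega⟩
  else ⟨2 * ℓ + 2, by omega⟩

def stepW (α β : ℝ) (s0 s : Fin 2) : ℝ :=
  if s0 = 0 then (if s = 0 then α else 1 - α) else (if s = 1 then β else 1 - β)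

lemma fin2_cases (s : Fin 2) : s = 0 ∨ s = 1 := by omega

lemma embed_val (ℓ j : ℕ) (s : Fin 2) :
    (embedIdx ℓ j s : ℕ) = if j ≤ ℓ then 2 * j + (if s = 0 then 1 else 0) else 2 * ℓ + 2 := by
  unfold embedIdx; split <;> simp_all

lemma step_eq (ℓ j : ℕ) (s0 : Fin 2) (α β : ℝ) (p : Fin (2 * ℓ + 3)) :
    (∑ s : Fin 2, if embedIdx ℓ (j + (if s0 = 0 ∧ s = 1 then 1 else 0)) s = p
        then stepW α β s0 s else 0)
    = jumpLambda ℓ α β (embedIdx ℓ j s0) p := by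
  have hp := p.isLt
  rcases fin2_cases s0 with h0 | h0 <;> subst h0 <;>
  · simp only [Fin.sum_univ_two, stepW, jumpLambda, Fin.ext_iff, embed_val]
    norm_num
    split_ifs <;> first | ring1 | (exfalso; omega)


lemma mu_eq_stepW (n : ℕ) (η : Fin 2 → ℝ) (a b : Fin n → ℝ) (z : Fin (n + 1) → Fin 2) :
    twoStateMu n η a b z = η (z 0) * ∏ t : Fin n, stepW (a t) (b t) (z t.castSucc) (z t.succ) := by
  unfold twoStateMu stepW
  rfl

lemma mu_snoc (n : ℕ) (η : Fin 2 → ℝ) (a b : Fin (n + 1) → ℝ) (z : Fin (n + 1) → Fin 2)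
    (s : Fin 2) :
    twoStateMu (n + 1) η a b (Fin.snoc z s) =
      twoStateMu n η (fun t => a t.castSucc) (fun t => b t.castSucc) z *
        stepW (a (Fin.last n)) (b (Fin.last n)) (z (Fin.last n)) s := by
  rw [mu_eq_stepW, mu_eq_stepW, Fin.prod_univ_castSucc]
  have h0 : (Fin.snoc z s : Fin (n + 2) → Fin 2) 0 = z 0 := by
    rw [show (0 : Fin (n + 2)) = Fin.castSucc 0 by rfl, Fin.snoc_castSucc]
  have hlast : (Fin.snoc z s : Fin (n + 2) → Fin 2) (Fin.last n).castSucc = z (Fin.last n) := by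
    simp
  have hsucc : (Fin.snoc z s : Fin (n + 2) → Fin 2) (Fin.last n).succ = s := by
    rw [Fin.succ_last, Fin.snoc_last]
  rw [h0, hlast, hsucc]
  have : ∀ t : Fin n,
      stepW (a t.castSucc) (b t.castSucc)
        ((Fin.snoc z s : Fin (n + 2) → Fin 2) t.castSucc.castSucc)
        ((Fin.snoc z s : Fin (n + 2) → Fin 2) t.castSucc.succ)
      = stepW (a t.castSucc) (b t.castSucc) (z t.castSucc) (z t.succ) := by
    intro t
    simp only [show (t.castSucc).succ = (t.succ).castSucc from rfl, Fin.snoc_castSucc]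
  rw [Finset.prod_congr rfl fun t _ => this t]
  ring

def Jcount (n : ℕ) (z : Fin (n + 1) → Fin 2) : ℕ :=
  (univ.filter (fun t : Fin n => z t.castSucc = 0 ∧ z t.succ = 1)).card

lemma Jcount_snoc (n : ℕ) (z : Fin (n + 1) → Fin 2) (s : Fin 2) :
    Jcount (n + 1) (Fin.snoc z s) =
      Jcount n z + (if z (Fin.last n) = 0 ∧ s = 1 then 1 else 0) := by
  unfold Jcount
  rw [Finset.card_filter, Finset.card_filter, Fin.sum_univ_castSucc]
  congr 1
  · refine Finset.sum_congr rfl fun t _ => ?_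
    simp only [show (t.castSucc).succ = (t.succ).castSucc from rfl, Fin.snoc_castSucc]
  · rw [Fin.succ_last]
    simp

def initVec (ℓ : ℕ) (η : Fin 2 → ℝ) : Fin (2 * ℓ + 3) → ℝ :=
  fun p => if (p : ℕ) = 0 then η 1 else if (p : ℕ) = 1 then η 0 else 0

lemma main (ℓ : ℕ) (η : Fin 2 → ℝ) :
    ∀ n (a b : Fin n → ℝ) (p : Fin (2 * ℓ + 3)),
      (∑ z ∈ univ.filter (fun z : Fin (n + 1) → Fin 2 =>
          embedIdx ℓ (Jcount n z) (z (Fin.last n)) = p), twoStateMu n η a b z)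
      = Matrix.vecMul (initVec ℓ η)
          (((List.finRange n).map (fun t => jumpLambda ℓ (a t) (b t))).prod) p
  | 0, a, b, p => by
      rw [List.finRange_zero, List.map_nil, List.prod_nil, Matrix.vecMul_one,
        Finset.sum_filter]
      rw [Fintype.sum_equiv (Equiv.funUnique (Fin 1) (Fin 2))
        (g := fun s : Fin 2 =>
          if embedIdx ℓ 0 s = p then η s else 0)
        (h := by
          intro z
          have hz : Jcount 0 z = 0 := by simp [Jcount]
          have hmu : twoStateMu 0 η a b z = η (z 0) := by
            simp [twoStateMu]
          rw [hz, hmu]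
          rfl)]
      rw [Fin.sum_univ_two]
      unfold initVec
      have h0 : ((embedIdx ℓ 0 0 : Fin (2 * ℓ + 3)) : ℕ) = 1 := by
        rw [embed_val]; simp
      have h1 : ((embedIdx ℓ 0 1 : Fin (2 * ℓ + 3)) : ℕ) = 0 := by
        rw [embed_val]; simp
      simp only [Fin.ext_iff, h0, h1]
      split_ifs <;> first | ring1 | (exfalso; omega)
  | (n + 1), a, b, p => by
      -- right-hand side
      rw [List.finRange_succ_last, List.map_append, List.map_map, List.prod_append]
      simp only [List.map_cons, List.map_nil, List.prod_cons, List.prod_nil, mul_one]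
      rw [← Matrix.vecMul_vecMul]
      have hRHS : ∀ q, Matrix.vecMul (initVec ℓ η)
          (((List.finRange n).map
            ((fun t => jumpLambda ℓ (a t) (b t)) ∘ Fin.castSucc)).prod) q
          = ∑ z ∈ univ.filter (fun z : Fin (n + 1) → Fin 2 =>
              embedIdx ℓ (Jcount n z) (z (Fin.last n)) = q),
              twoStateMu n η (fun t => a t.castSucc) (fun t => b t.castSucc) z := by
        intro q
        rw [main ℓ η n (fun t => a t.castSucc) (fun t => b t.castSucc) q]
        rfl
      conv_rhs => rw [Matrix.vecMul]
      simp only [dotProduct, hRHS]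
      -- left-hand side
      rw [Finset.sum_filter]
      rw [← Fintype.sum_bijective (fun w : Fin 2 × (Fin (n + 1) → Fin 2) => Fin.snoc w.2 w.1)
        (by exact (Fin.snocEquiv (fun _ => Fin 2)).bijective)
        (f := fun w : Fin 2 × (Fin (n + 1) → Fin 2) =>
          if embedIdx ℓ (Jcount (n + 1) (Fin.snoc w.2 w.1))
              ((Fin.snoc w.2 w.1 : Fin (n + 2) → Fin 2) (Fin.last (n + 1))) = p
          then twoStateMu (n + 1) η a b (Fin.snoc w.2 w.1) else 0)
        (g := fun z : Fin (n + 2) → Fin 2 =>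
          if embedIdx ℓ (Jcount (n + 1) z) (z (Fin.last (n + 1))) = p
          then twoStateMu (n + 1) η a b z else 0)
        (fun w => rfl)]
      rw [Fintype.sum_prod_type, Finset.sum_comm]
      have key : ∀ z : Fin (n + 1) → Fin 2,
          (∑ s : Fin 2,
            if embedIdx ℓ (Jcount (n + 1) (Fin.snoc z s))
                ((Fin.snoc z s : Fin (n + 2) → Fin 2) (Fin.last (n + 1))) = p
            then twoStateMu (n + 1) η a b (Fin.snoc z s) else 0)
          = twoStateMu n η (fun t => a t.castSucc) (fun t => b t.castSucc) z *
              jumpLambda ℓ (a (Fin.last n)) (b (Fin.last n))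
                (embedIdx ℓ (Jcount n z) (z (Fin.last n))) p := by
        intro z
        rw [← step_eq ℓ (Jcount n z) (z (Fin.last n)) (a (Fin.last n)) (b (Fin.last n)) p,
          Finset.mul_sum]
        refine Finset.sum_congr rfl fun s _ => ?_
        rw [Jcount_snoc, mu_snoc]
        have hs : (Fin.snoc z s : Fin (n + 2) → Fin 2) (Fin.last (n + 1)) = s := by simp
        rw [hs, mul_ite, mul_zero]
      simp only [key]
      rw [← Finset.sum_fiberwise univ
        (fun z : Fin (n + 1) → Fin 2 => embedIdx ℓ (Jcount n z) (z (Fin.last n)))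
        (fun z => twoStateMu n η (fun t => a t.castSucc) (fun t => b t.castSucc) z *
              jumpLambda ℓ (a (Fin.last n)) (b (Fin.last n))
                (embedIdx ℓ (Jcount n z) (z (Fin.last n))) p)]
      refine Finset.sum_congr rfl fun q _ => ?_
      rw [Finset.sum_mul]
      refine Finset.sum_congr rfl fun z hz => ?_
      rw [(Finset.mem_filter.mp hz).2]

lemma final (n ℓ k : ℕ) (hk : k ≤ ℓ) (η : Fin 2 → ℝ) (a b : Fin n → ℝ) :
    (∑ z ∈ univ.filter (fun z : Fin (n + 1) → Fin 2 => Jcount n z = k),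
      twoStateMu n η a b z)
    = Matrix.vecMul (initVec ℓ η)
        (((List.finRange n).map (fun t => jumpLambda ℓ (a t) (b t))).prod)
        ⟨2 * k, (show 2 * k < 2 * ℓ + 3 + 0 by omega)⟩
    + Matrix.vecMul (initVec ℓ η)
        (((List.finRange n).map (fun t => jumpLambda ℓ (a t) (b t))).prod)
        ⟨2 * k + 1, (show 2 * k + 1 < 2 * ℓ + 3 + 0 by omega)⟩ := by
  rw [← main ℓ η n a b ⟨2 * k, (show 2 * k < 2 * ℓ + 3 + 0 by omega)⟩, ← main ℓ η n a b ⟨2 * k + 1, (show 2 * k + 1 < 2 * ℓ + 3 + 0 by omega)⟩]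
  rw [Finset.sum_filter, Finset.sum_filter, Finset.sum_filter, ← Finset.sum_add_distrib]
  refine Finset.sum_congr rfl fun z _ => ?_
  have hv0 : ((⟨2 * k, (show 2 * k < 2 * ℓ + 3 + 0 by omega)⟩ : Fin (2 * ℓ + 3)) : ℕ) = 2 * k := rfl
  have hv1 : ((⟨2 * k + 1, (show 2 * k + 1 < 2 * ℓ + 3 + 0 by omega)⟩ : Fin (2 * ℓ + 3)) : ℕ) = 2 * k + 1 := rfl
  simp only [Fin.ext_iff, embed_val, hv0, hv1]
  rcases fin2_cases (z (Fin.last n)) with h | h <;>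
    · simp only [h, show ((0 : Fin 2) = 0) = True by simp,
        show ((1 : Fin 2) = 0) = False by simp, if_true, if_false]
      split_ifs <;> first | ring1 | (exfalso; omega)

end FMCIJumps

/-- **FMCI for the number of jumps.** Let `(Z_t)` be an inhomogeneous two-state Markov
chain with stay probabilities `a_t`, `b_t` and initial law `η`, and let `J_n`
count the jumps `1 → 2`.  Then for every `k ≤ ℓ`, `P(J_n = k)` equals the sum of the
two entries corresponding to `(k, 2)` and `(k, 1)` of the row vector
`η̃ Π_t Λ(a_t, b_t)`, where `η̃` places `η`'s mass on `(0,2)` and `(0,1)`. -/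
theorem fmci_number_of_jumps (n ℓ : ℕ) (η : Fin 2 → ℝ)
    (hη0 : ∀ i, 0 ≤ η i) (hη1 : η 0 + η 1 = 1)
    (a b : Fin n → ℝ)
    (ha : ∀ t, a t ∈ Set.Icc (0 : ℝ) 1) (hb : ∀ t, b t ∈ Set.Icc (0 : ℝ) 1)
    (k : ℕ) (hk : k ≤ ℓ) :
    ∑ z ∈ univ.filter (fun z : Fin (n + 1) → Fin 2 =>
        (univ.filter (fun t : Fin n => z t.castSucc = 0 ∧ z t.succ = 1)).card = k),
      twoStateMu n η a b z
    =
    Matrix.vecMul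
        (fun p : Fin (2 * ℓ + 3) =>
          if (p : ℕ) = 0 then η 1 else if (p : ℕ) = 1 then η 0 else 0)
        (((List.finRange n).map (fun t => jumpLambda ℓ (a t) (b t))).prod)
        ⟨2 * k, by omega⟩
    + Matrix.vecMul
        (fun p : Fin (2 * ℓ + 3) =>
          if (p : ℕ) = 0 then η 1 else if (p : ℕ) = 1 then η 0 else 0)
        (((List.finRange n).map (fun t => jumpLambda ℓ (a t) (b t))).prod)
        ⟨2 * k + 1, by omega⟩ := by
  exact FMCIJumps.final n ℓ k hk η a b
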